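/- With $\mathsf C(\theta)$ as above ($t=\sin\theta$, $s=\cos\theta$), the product in the other order satisfies $\mathsf C(\theta)\mathsf C(\theta)^{\top}=1_{\mathbb N}-(\delta_{t,1}+\delta_{t,-1})\mathbf e_{0,0}$, i.e. it equals the identity matrix when $|t|<1$, and equals the identity minus the $(0,0)$ matrix unit when $t=\pm1$. -/

import Mathlib

/-- The "shifting rotation" matrix `C(θ)` (same as in the previous statement). -/
noncomputable def Cmat (θ : ℝ) (i j : ℕ) : ℝ :=
  if i = 0 then (Real.sin θ) ^ j * Real.cos θ
  else if j + 1 = i then -(Real.sin θ)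
  else if i ≤ j then (Real.sin θ) ^ (j - i) * (Real.cos θ) ^ 2
  else 0


private lemma Cmat_zero (θ : ℝ) (j : ℕ) :
    Cmat θ 0 j = Real.sin θ ^ j * Real.cos θ := by simp [Cmat]

private lemma Cmat_succ_eq (θ : ℝ) {i j : ℕ} (hi : i ≠ 0) (h : j + 1 = i) :
    Cmat θ i j = -(Real.sin θ) := by
  rw [Cmat, if_neg hi, if_pos h]

private lemma Cmat_of_le (θ : ℝ) {i j : ℕ} (hi : i ≠ 0) (h : i ≤ j) :
    Cmat θ i j = Real.sin θ ^ (j - i) * Real.cos θ ^ 2 := by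
  rw [Cmat, if_neg hi, if_neg (by omega), if_pos h]

private lemma Cmat_of_gt (θ : ℝ) {i j : ℕ} (hi : i ≠ 0) (h : j + 1 < i) :
    Cmat θ i j = 0 := by
  rw [Cmat, if_neg hi, if_neg (by omega), if_neg (by omega)]

private lemma single_hasSum (N : ℕ) (v : ℝ) :
    HasSum (fun j : ℕ => if j + 1 = N then v else 0) (if 1 ≤ N then v else 0) := by
  cases N with
  | zero => simpa using (hasSum_zero : HasSum (fun _ : ℕ => (0:ℝ)) 0)
  | succ m => simpa using hasSum_ite_eq m v

private lemma tail_hasSum (N : ℕ) (c r : ℝ) (h0 : 0 ≤ r) (h1 : r < 1) :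
    HasSum (fun j : ℕ => if N ≤ j then c * r ^ (j - N) else 0) (c / (1 - r)) := by
  have hg := (hasSum_geometric_of_lt_one h0 h1).mul_left c
  have h2 : HasSum (fun n : ℕ =>
      (fun j : ℕ => if N ≤ j then c * r ^ (j - N) else 0) (n + N)) (c * (1 - r)⁻¹) := by
    simpa using hg
  have h3 := (hasSum_nat_add_iff (f := fun j : ℕ => if N ≤ j then c * r ^ (j - N) else 0) N).mp h2
  have hz : ∑ x ∈ Finset.range N, (if N ≤ x then c * r ^ (x - N) else 0) = 0 :=
    Finset.sum_eq_zero fun x hx => by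
      rw [if_neg (Nat.not_le.mpr (Finset.mem_range.mp hx))]
  rw [hz, add_zero, ← div_eq_mul_inv] at h3
  exact h3

private lemma key_hasSum (N : ℕ) (v c r : ℝ) (h0 : 0 ≤ r) (h1 : r < 1) (f : ℕ → ℝ)
    (hf : ∀ j, f j = (if j + 1 = N then v else 0) + (if N ≤ j then c * r ^ (j - N) else 0)) :
    HasSum f ((if 1 ≤ N then v else 0) + c / (1 - r)) := by
  have h := (single_hasSum N v).add (tail_hasSum N c r h0 h1)
  rwa [show f = fun j => (if j + 1 = N then v else 0) +
      (if N ≤ j then c * r ^ (j - N) else 0) from funext hf]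

private lemma aux_hasSum (θ : ℝ) (hc : Real.cos θ ≠ 0) (i k : ℕ) (hik : i ≤ k) :
    HasSum (fun j : ℕ => Cmat θ i j * Cmat θ k j) (if i = k then 1 else 0) := by
  set t := Real.sin θ with ht
  set s := Real.cos θ with hs
  have hpyth : t ^ 2 + s ^ 2 = 1 := Real.sin_sq_add_cos_sq θ
  have hs2 : 1 - t ^ 2 = s ^ 2 := by linarith
  have hsne : s ^ 2 ≠ 0 := pow_ne_zero 2 hc
  have hspos : 0 < s ^ 2 := lt_of_le_of_ne (sq_nonneg s) (Ne.symm hsne)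
  have h0 : (0:ℝ) ≤ t ^ 2 := sq_nonneg t
  have h1 : t ^ 2 < 1 := by linarith
  rcases Nat.eq_zero_or_pos k with hk | hk
  · -- k = 0, hence i = 0
    subst hk
    have hi : i = 0 := Nat.le_zero.mp hik
    subst hi
    have h := key_hasSum 0 0 (s ^ 2) (t ^ 2) h0 h1
      (fun j : ℕ => Cmat θ 0 j * Cmat θ 0 j) (by
        intro j
        show Cmat θ 0 j * Cmat θ 0 j = _
        rw [Cmat_zero, if_neg (by omega : ¬ j + 1 = 0), if_pos (Nat.zero_le j),
          Nat.sub_zero, zero_add, ← pow_mul]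
        ring)
    simpa [hs2, div_self hsne] using h
  · -- k ≥ 1
    rcases Nat.eq_zero_or_pos i with hi | hi
    · -- i = 0 < k
      subst hi
      have h := key_hasSum k (-(t ^ (k - 1) * s * t)) (t ^ k * s ^ 3) (t ^ 2) h0 h1
        (fun j : ℕ => Cmat θ 0 j * Cmat θ k j) (by
          intro j
          show Cmat θ 0 j * Cmat θ k j = _
          rw [Cmat_zero]
          by_cases hj1 : j + 1 = k
          · rw [Cmat_succ_eq θ (by omega) hj1, if_pos hj1, if_neg (by omega : ¬ k ≤ j),
              add_zero, show j = k - 1 by omega]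
            ring
          · rw [if_neg hj1, zero_add]
            by_cases hj2 : k ≤ j
            · rw [Cmat_of_le θ (by omega) hj2, if_pos hj2]
              obtain ⟨m, rfl⟩ : ∃ m, j = k + m := ⟨j - k, by omega⟩
              rw [show k + m - k = m by omega, pow_add, ← pow_mul]
              ring
            · rw [Cmat_of_gt θ (by omega) (by omega), if_neg hj2, mul_zero])
      rw [if_neg (by omega : ¬ (0:ℕ) = k)]
      have hval : (if 1 ≤ k then -(t ^ (k - 1) * s * t) else 0) + t ^ k * s ^ 3 / (1 - t ^ 2)
          = 0 := by
        rw [if_pos (by omega : 1 ≤ k), hs2, show k = (k - 1) + 1 by omega, pow_succ]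
        rw [Nat.add_sub_cancel]
        field_simp
        ring
      rwa [hval] at h
    · -- 1 ≤ i ≤ k
      rcases eq_or_lt_of_le hik with rfl | hlt
      · -- i = k
        have h := key_hasSum i (t ^ 2) (s ^ 4) (t ^ 2) h0 h1
          (fun j : ℕ => Cmat θ i j * Cmat θ i j) (by
            intro j
            show Cmat θ i j * Cmat θ i j = _
            by_cases hj1 : j + 1 = i
            · rw [Cmat_succ_eq θ (by omega) hj1, if_pos hj1, if_neg (by omega : ¬ i ≤ j),
                add_zero]
              ring
            · rw [if_neg hj1, zero_add]
              by_cases hj2 : i ≤ j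
              · rw [Cmat_of_le θ (by omega) hj2, if_pos hj2]
                obtain ⟨m, rfl⟩ : ∃ m, j = i + m := ⟨j - i, by omega⟩
                rw [show i + m - i = m by omega, ← pow_mul]
                ring
              · rw [Cmat_of_gt θ (by omega) (by omega), if_neg hj2, mul_zero])
        rw [if_pos rfl]
        have hval : (if 1 ≤ i then t ^ 2 else 0) + s ^ 4 / (1 - t ^ 2) = 1 := by
          rw [if_pos (by omega : 1 ≤ i), hs2,
            show s ^ 4 = s ^ 2 * s ^ 2 by ring, mul_div_assoc, div_self hsne, mul_one]
          linarith
        rwa [hval] at h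
      · -- 1 ≤ i < k
        have h := key_hasSum k (-(t ^ (k - 1 - i) * s ^ 2 * t)) (t ^ (k - i) * s ^ 4)
          (t ^ 2) h0 h1 (fun j : ℕ => Cmat θ i j * Cmat θ k j) (by
            intro j
            show Cmat θ i j * Cmat θ k j = _
            by_cases hj1 : j + 1 = k
            · rw [Cmat_succ_eq θ (by omega) hj1, Cmat_of_le θ (by omega) (by omega : i ≤ j),
                if_pos hj1, if_neg (by omega : ¬ k ≤ j), add_zero,
                show j - i = k - 1 - i by omega]
              ring
            · rw [if_neg hj1, zero_add]
              by_cases hj2 : k ≤ j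
              · rw [Cmat_of_le θ (by omega : i ≠ 0) (by omega : i ≤ j),
                  Cmat_of_le θ (by omega : k ≠ 0) hj2, if_pos hj2]
                obtain ⟨m, rfl⟩ : ∃ m, j = k + m := ⟨j - k, by omega⟩
                rw [show k + m - k = m by omega, show k + m - i = (k - i) + m by omega,
                  pow_add, ← pow_mul]
                ring
              · rw [Cmat_of_gt θ (by omega : k ≠ 0) (by omega), if_neg hj2, mul_zero])
        rw [if_neg (by omega : ¬ i = k)]
        have hval : (if 1 ≤ k then -(t ^ (k - 1 - i) * s ^ 2 * t) else 0)
            + t ^ (k - i) * s ^ 4 / (1 - t ^ 2) = 0 := by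
          rw [if_pos (by omega : 1 ≤ k), hs2, show k - i = (k - 1 - i) + 1 by omega, pow_succ]
          field_simp
          ring
        rwa [hval] at h

/-- `C(θ) C(θ)ᵀ = 1 - (δ_{t,1} + δ_{t,-1}) e₀₀` where `t = sin θ`:
it is the identity for `|t| < 1`, and the identity minus the `(0,0)` matrix
unit for `t = ±1`. -/
theorem Cmat_mul_transpose_self (θ : ℝ) (i k : ℕ) :
    HasSum (fun j : ℕ => Cmat θ i j * Cmat θ k j)
      ((if i = k then 1 else 0) -
        (if (Real.sin θ = 1 ∨ Real.sin θ = -1) ∧ i = 0 ∧ k = 0 then 1 else 0)) := by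
  by_cases hc : Real.cos θ = 0
  · -- degenerate case: sin θ = ±1
    have hpyth : Real.sin θ ^ 2 + Real.cos θ ^ 2 = 1 := Real.sin_sq_add_cos_sq θ
    have ht2 : Real.sin θ ^ 2 = 1 := by rw [hc] at hpyth; simpa using hpyth
    have htpm : Real.sin θ = 1 ∨ Real.sin θ = -1 := by
      have h2 : (Real.sin θ - 1) * (Real.sin θ + 1) = 0 := by nlinarith
      rcases mul_eq_zero.mp h2 with h | h
      · exact Or.inl (by linarith)
      · exact Or.inr (by linarith)
    by_cases hik : i = k
    · subst hik
      by_cases hi : i = 0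
      · subst hi
        rw [if_pos rfl, if_pos ⟨htpm, rfl, rfl⟩]
        have hfz : (fun j : ℕ => Cmat θ 0 j * Cmat θ 0 j) = fun _ => (0:ℝ) := by
          funext j; simp [Cmat, hc]
        rw [hfz]
        simpa using (hasSum_zero : HasSum (fun _ : ℕ => (0:ℝ)) 0)
      · rw [if_pos rfl, if_neg (by tauto)]
        have hfe : (fun j : ℕ => Cmat θ i j * Cmat θ i j)
            = fun j => if j = i - 1 then (1:ℝ) else 0 := by
          funext j
          simp only [Cmat, if_neg hi]
          by_cases hj1 : j + 1 = i
          · rw [if_pos hj1, if_pos (by omega : j = i - 1)]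
            rw [show -Real.sin θ * -Real.sin θ = Real.sin θ ^ 2 by ring, ht2]
          · rw [if_neg hj1, if_neg (by omega : ¬ j = i - 1)]
            by_cases hj2 : i ≤ j
            · rw [if_pos hj2, hc]; ring
            · rw [if_neg hj2]; ring
        rw [hfe]
        simpa using hasSum_ite_eq (i - 1) (1:ℝ)
    · rw [if_neg hik, if_neg (by rintro ⟨_, rfl, rfl⟩; exact hik rfl)]
      have hfz : (fun j : ℕ => Cmat θ i j * Cmat θ k j) = fun _ => (0:ℝ) := by
        funext j
        simp only [Cmat]
        by_cases hi : i = 0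
        · rw [if_pos hi, hc]; ring
        · rw [if_neg hi]
          by_cases hk : k = 0
          · rw [if_pos hk, hc]; ring
          · rw [if_neg hk]
            by_cases hj1 : j + 1 = i
            · rw [if_pos hj1, if_neg (by omega : ¬ j + 1 = k)]
              by_cases hj2 : k ≤ j
              · rw [if_pos hj2, hc]; ring
              · rw [if_neg hj2]; ring
            · rw [if_neg hj1]
              by_cases hj2 : i ≤ j
              · rw [if_pos hj2, hc]; ring
              · rw [if_neg hj2]; ring
      rw [hfz]
      simpa using (hasSum_zero : HasSum (fun _ : ℕ => (0:ℝ)) 0)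
  · -- nondegenerate case
    have hnot : ¬ (Real.sin θ = 1 ∨ Real.sin θ = -1) := by
      have hpyth : Real.sin θ ^ 2 + Real.cos θ ^ 2 = 1 := Real.sin_sq_add_cos_sq θ
      rintro (h | h) <;>
      · rw [h] at hpyth
        apply hc
        have : Real.cos θ ^ 2 = 0 := by nlinarith
        exact pow_eq_zero_iff (n := 2) (by norm_num) |>.mp this
    rw [if_neg (show ¬((Real.sin θ = 1 ∨ Real.sin θ = -1) ∧ i = 0 ∧ k = 0) from fun h => hnot h.1), sub_zero]
    by_cases hik : i ≤ k
    · exact aux_hasSum θ hc i k hik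
    · have h := aux_hasSum θ hc k i (by omega)
      have h' : HasSum (fun j : ℕ => Cmat θ i j * Cmat θ k j) (if k = i then 1 else 0) := by
        have : (fun j : ℕ => Cmat θ k j * Cmat θ i j)
            = fun j : ℕ => Cmat θ i j * Cmat θ k j := by
          funext j; ring
        rwa [this] at h
      rwa [show (if k = i then (1:ℝ) else 0) = (if i = k then 1 else 0) by
        rw [if_neg (by omega : ¬ k = i), if_neg (by omega : ¬ i = k)]] at h'
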